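/- Let (A,m,k) be a noetherian local ring, F a minimal acyclic complex of finitely generated free A-modules of length s with boundary maps d_i, and x ∈ m a non-zerodivisor contained in some column ideal of d_i for some i ≥ 2. Then the complex A/(x) ⊗_A F truncated as 0 → F̄_s → ⋯ → F̄_2 → F̄_1 is a minimal acyclic complex of free A/(x)-modules, where bars denote reduction mod x. -/

import Mathlib

open CategoryTheory

noncomputable section

/-- `gradeGE I n` : the ideal `I` has grade (length of a longest regular sequence contained
in it) at least `n`, with the convention that the unit ideal has grade `∞`. -/
def gradeGE (A : Type) [CommRing A] (I : Ideal A) (n : ℕ) : Prop :=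
  I = ⊤ ∨ ∃ rs : List A, rs.length = n ∧ (∀ r ∈ rs, r ∈ I) ∧ RingTheory.Sequence.IsRegular A rs

/-- A complex `0 → F_s → ⋯ → F_1 → F_0` of finitely generated free `A`-modules;
`d i : F_{i+1} → F_i` corresponds to the boundary map `d_{i+1}`. -/
structure FreeComplex (A : Type) [CommRing A] (s : ℕ) where
  rk : ℕ → ℕ
  d : ∀ i : ℕ, (Fin (rk (i+1)) → A) →ₗ[A] (Fin (rk i) → A)
  bounded : ∀ i : ℕ, s < i → rk i = 0

/-- Acyclicity : `H_i = 0` for all `i ≥ 1`. -/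
def FreeComplex.Acyclic {A : Type} [CommRing A] {s : ℕ} (F : FreeComplex A s) : Prop :=
  ∀ i, LinearMap.ker (F.d i) = LinearMap.range (F.d (i+1))

/-- Minimality : `k ⊗ F` has null differentials, i.e. all boundary maps land in `m F`. -/
def FreeComplex.Minimal {A : Type} [CommRing A] [IsLocalRing A] {s : ℕ}
    (F : FreeComplex A s) : Prop :=
  ∀ i, LinearMap.range (F.d i) ≤
    (IsLocalRing.maximalIdeal A) • (⊤ : Submodule A (Fin (F.rk i) → A))

/-- The column ideal of the `j`-th column of the matrix of `f` with respect to the bases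
`b` and `c`. -/
def columnIdeal {A : Type} [CommRing A] {m n : ℕ} (f : (Fin m → A) →ₗ[A] (Fin n → A))
    (b : Module.Basis (Fin m) A (Fin m → A)) (c : Module.Basis (Fin n) A (Fin n → A)) (j : Fin m) : Ideal A :=
  Ideal.span (Set.range fun i => LinearMap.toMatrix b c f i j)

/-- The quotient of a local ring by an element of the maximal ideal is local. -/
lemma quotLocalOfMem {A : Type} [CommRing A] [IsLocalRing A] {x : A}
    (hx : x ∈ IsLocalRing.maximalIdeal A) : IsLocalRing (A ⧸ Ideal.span {x}) := by
  have hne : Ideal.span {x} ≠ ⊤ := by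
    intro h
    exact (IsLocalRing.maximalIdeal.isMaximal A).ne_top
      (top_le_iff.mp (h ▸ Ideal.span_le.mpr (Set.singleton_subset_iff.mpr hx)))
  have : Nontrivial (A ⧸ Ideal.span {x}) := Ideal.Quotient.nontrivial_iff.mpr hne
  exact IsLocalRing.of_surjective' (Ideal.Quotient.mk _) Ideal.Quotient.mk_surjective

/-- If `x ∈ m` is a non-zerodivisor lying in a column ideal of the boundary
map `d_{j+1}` (`j ≥ 1`) of a minimal acyclic complex `F` of finitely generated free modules,
then the reduction mod `x` of the truncation `0 → F̄_s → ⋯ → F̄_1` is a minimal acyclic complex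
of free `A/(x)`-modules. -/
theorem reduction_mod_nonzerodivisor
    (A : Type) [CommRing A] [IsNoetherianRing A] [IsLocalRing A]
    (s : ℕ) (F : FreeComplex A s) (hac : F.Acyclic) (hmin : F.Minimal)
    (x : A) (hxm : x ∈ IsLocalRing.maximalIdeal A) (hxreg : x ∈ nonZeroDivisors A)
    (j : ℕ) (hj1 : 1 ≤ j) (hjs : j + 1 ≤ s)
    (b : Module.Basis (Fin (F.rk (j+1))) A (Fin (F.rk (j+1)) → A))
    (c : Module.Basis (Fin (F.rk j)) A (Fin (F.rk j) → A))
    (col : Fin (F.rk (j+1)))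
    (hx : x ∈ columnIdeal (F.d j) b c col) :
    letI : IsLocalRing (A ⧸ Ideal.span {x}) := quotLocalOfMem hxm
    let dbar : ∀ i : ℕ, (Fin (F.rk (i+1)) → A ⧸ Ideal.span {x}) →ₗ[A ⧸ Ideal.span {x}]
        (Fin (F.rk i) → A ⧸ Ideal.span {x}) :=
      fun i => Matrix.toLin'
        ((LinearMap.toMatrix' (F.d i)).map (Ideal.Quotient.mk (Ideal.span {x})))
    (∀ i : ℕ, 1 ≤ i → LinearMap.ker (dbar i) = LinearMap.range (dbar (i+1))) ∧
    (∀ i : ℕ, 1 ≤ i → LinearMap.range (dbar i) ≤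
      (IsLocalRing.maximalIdeal (A ⧸ Ideal.span {x})) •
        (⊤ : Submodule (A ⧸ Ideal.span {x}) (Fin (F.rk i) → A ⧸ Ideal.span {x}))) := by
  haveI : IsLocalRing (A ⧸ Ideal.span {x}) := quotLocalOfMem hxm
  intro dbar
  have hIm : Ideal.span {x} ≤ IsLocalRing.maximalIdeal A :=
    Ideal.span_le.mpr (Set.singleton_subset_iff.mpr hxm)
  -- representation of d via its matrix
  have hrep : ∀ (i : ℕ) (u : Fin (F.rk (i+1)) → A),
      F.d i u = (LinearMap.toMatrix' (F.d i)).mulVec u := by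
    intro i u
    rw [← Matrix.toLin'_apply, Matrix.toLin'_toMatrix']
  -- key commutation lemma
  have key : ∀ (i : ℕ) (u : Fin (F.rk (i+1)) → A),
      dbar i (fun k => Ideal.Quotient.mk (Ideal.span {x}) (u k)) =
        fun k => Ideal.Quotient.mk (Ideal.span {x}) (F.d i u k) := by
    intro i u
    funext k
    simp only [dbar, Matrix.toLin'_apply, Matrix.mulVec, dotProduct,
      Matrix.map_apply, hrep]
    rw [map_sum]
    exact Finset.sum_congr rfl fun l _ => (map_mul _ _ _).symm
  -- surjectivity of componentwise reduction
  have surj : ∀ (n : ℕ) (v : Fin n → A ⧸ Ideal.span {x}), ∃ u : Fin n → A,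
      (fun k => Ideal.Quotient.mk (Ideal.span {x}) (u k)) = v := by
    intro n v
    refine ⟨fun k => (Ideal.Quotient.mk_surjective (v k)).choose, funext fun k => ?_⟩
    exact (Ideal.Quotient.mk_surjective (v k)).choose_spec
  -- d ∘ d = 0
  have hdd : ∀ (i : ℕ) (w : Fin (F.rk (i+2)) → A), F.d i (F.d (i+1) w) = 0 := by
    intro i w
    have : F.d (i+1) w ∈ LinearMap.ker (F.d i) := by
      rw [hac i]; exact ⟨w, rfl⟩
    exact this
  refine ⟨?_, ?_⟩
  · -- acyclicity
    intro i hi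
    obtain ⟨n, rfl⟩ : ∃ n, i = n + 1 := ⟨i - 1, (Nat.succ_pred_eq_of_pos hi).symm⟩
    apply le_antisymm
    · intro vb hv
      obtain ⟨v, rfl⟩ := surj _ vb
      rw [LinearMap.mem_ker, key] at hv
      have hcomp : ∀ k, ∃ cc, F.d (n+1) v k = x * cc := by
        intro k
        have h0 : Ideal.Quotient.mk (Ideal.span {x}) (F.d (n+1) v k) = 0 := congrFun hv k
        have hmem : F.d (n+1) v k ∈ Ideal.span {x} := (Ideal.Quotient.eq_zero_iff_mem).mp h0
        obtain ⟨cc, hc⟩ := Ideal.mem_span_singleton'.mp hmem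
        exact ⟨cc, by rw [← hc, mul_comm]⟩
      choose w hw using hcomp
      have hdv : F.d (n+1) v = x • w := funext fun k => by
        rw [hw k]; simp [Pi.smul_apply, smul_eq_mul]
      have hxw : x • F.d n w = 0 := by
        rw [← map_smul, ← hdv]; exact hdd n v
      have hw0 : F.d n w = 0 := by
        funext k
        have h2 := congrFun hxw k
        simp only [Pi.smul_apply, smul_eq_mul, Pi.zero_apply] at h2 ⊢
        exact hxreg.2 _ (by rw [mul_comm]; exact h2)
      have hwr : w ∈ LinearMap.range (F.d (n+1)) := by
        rw [← hac n]; exact hw0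
      obtain ⟨u, hu⟩ := hwr
      have hvu : F.d (n+1) (v - x • u) = 0 := by
        rw [map_sub, map_smul, hu, hdv, sub_self]
      have hvr : v - x • u ∈ LinearMap.range (F.d (n+2)) := by
        rw [← hac (n+1)]; exact hvu
      obtain ⟨t, ht⟩ := hvr
      refine ⟨fun k => Ideal.Quotient.mk (Ideal.span {x}) (t k), ?_⟩
      rw [key, ht]
      funext k
      rw [Ideal.Quotient.mk_eq_mk_iff_sub_mem]
      have : (v - x • u) k - v k = -(x * u k) := by
        simp [Pi.sub_apply, Pi.smul_apply, smul_eq_mul]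
      rw [this]
      exact neg_mem (Ideal.mem_span_singleton'.mpr ⟨u k, mul_comm (u k) x⟩)
    · rintro _ ⟨wb, rfl⟩
      obtain ⟨w, rfl⟩ := surj _ wb
      rw [LinearMap.mem_ker, key, key, hdd]
      funext k
      simp
  · -- minimality
    intro i _
    rintro _ ⟨ub, rfl⟩
    obtain ⟨u, rfl⟩ := surj _ ub
    rw [key]
    have hm : F.d i u ∈ (IsLocalRing.maximalIdeal A) •
        (⊤ : Submodule A (Fin (F.rk i) → A)) := hmin i ⟨u, rfl⟩
    refine Submodule.smul_induction_on
      (p := fun z => (fun k => Ideal.Quotient.mk (Ideal.span {x}) (z k)) ∈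
        (IsLocalRing.maximalIdeal (A ⧸ Ideal.span {x})) •
        (⊤ : Submodule (A ⧸ Ideal.span {x}) (Fin (F.rk i) → A ⧸ Ideal.span {x})))
      hm ?_ ?_
    · intro r hr z _
      have heq : (fun k => Ideal.Quotient.mk (Ideal.span {x}) ((r • z) k)) =
          (Ideal.Quotient.mk (Ideal.span {x}) r) •
            fun k => Ideal.Quotient.mk (Ideal.span {x}) (z k) := by
        funext k; simp [smul_eq_mul]
      rw [heq]
      refine Submodule.smul_mem_smul ?_ trivial
      rw [IsLocalRing.mem_maximalIdeal, mem_nonunits_iff]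
      intro hU
      obtain ⟨b', hb'⟩ := hU.exists_right_inv
      obtain ⟨b0, rfl⟩ := Ideal.Quotient.mk_surjective b'
      have hsub : r * b0 - 1 ∈ Ideal.span {x} := by
        rw [← Ideal.Quotient.eq_zero_iff_mem]
        simp only [map_sub, map_mul, map_one]
        rw [hb', sub_self]
      have h1 : (1 : A) ∈ IsLocalRing.maximalIdeal A := by
        have hrb : r * b0 ∈ IsLocalRing.maximalIdeal A :=
          Ideal.mul_mem_right _ _ hr
        have h3 := sub_mem hrb (hIm hsub)
        simpa using h3
      exact (IsLocalRing.maximalIdeal.isMaximal A).ne_top ((Ideal.eq_top_iff_one _).mpr h1)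
    · intro y z hy hz
      have heq : (fun k => Ideal.Quotient.mk (Ideal.span {x}) ((y + z) k)) =
          (fun k => Ideal.Quotient.mk (Ideal.span {x}) (y k)) +
            fun k => Ideal.Quotient.mk (Ideal.span {x}) (z k) := by
        funext k; simp
      rw [heq]
      exact Submodule.add_mem _ hy hz
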